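/- Let Φ be a CPTP map on M_d admitting a Markov–Dobrushin minorization: there is a positive semidefinite matrix B with B ≤ Φ(P) for every rank-one projection P. Then κ_tr(Φ) ≤ 1 − tr(B). -/

import Mathlib

open Matrix
open scoped ComplexOrder

namespace TD

variable {d : ℕ}

noncomputable def trNorm (A : Matrix (Fin d) (Fin d) ℂ) : ℝ :=
  (((Matrix.posSemidef_conjTranspose_mul_self A).1.eigenvectorUnitary.1 *
    Matrix.diagonal (fun i => ((Real.sqrt ((Matrix.posSemidef_conjTranspose_mul_self A).1.eigenvalues i) : ℝ) : ℂ)) *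
    (star (Matrix.posSemidef_conjTranspose_mul_self A).1.eigenvectorUnitary : Matrix (Fin d) (Fin d) ℂ)).trace).re

noncomputable def hsNorm (A : Matrix (Fin d) (Fin d) ℂ) : ℝ :=
  Real.sqrt ((Aᴴ * A).trace.re)

def Density (ρ : Matrix (Fin d) (Fin d) ℂ) : Prop :=
  ρ.PosSemidef ∧ ρ.trace = 1

def PosMap (T : Matrix (Fin d) (Fin d) ℂ →ₗ[ℂ] Matrix (Fin d) (Fin d) ℂ) : Prop :=
  ∀ A, A.PosSemidef → (T A).PosSemidef

def TrPres (T : Matrix (Fin d) (Fin d) ℂ →ₗ[ℂ] Matrix (Fin d) (Fin d) ℂ) : Prop :=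
  ∀ A, (T A).trace = A.trace

noncomputable def kappaTr (T : Matrix (Fin d) (Fin d) ℂ →ₗ[ℂ] Matrix (Fin d) (Fin d) ℂ) : ℝ :=
  ⨆ X : {X : Matrix (Fin d) (Fin d) ℂ // X.IsHermitian ∧ X.trace = 0 ∧ X ≠ 0},
    trNorm (T X.1) / trNorm X.1

noncomputable def opNorm1 (L : Matrix (Fin d) (Fin d) ℂ →ₗ[ℂ] Matrix (Fin d) (Fin d) ℂ) : ℝ :=
  ⨆ X : {X : Matrix (Fin d) (Fin d) ℂ // X ≠ 0}, trNorm (L X.1) / trNorm X.1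

noncomputable def s0 (T : Matrix (Fin d) (Fin d) ℂ →ₗ[ℂ] Matrix (Fin d) (Fin d) ℂ) : ℝ :=
  ⨆ X : {X : Matrix (Fin d) (Fin d) ℂ // X.trace = 0 ∧ X ≠ 0},
    hsNorm (T X.1) / hsNorm X.1

noncomputable def choi (T : Matrix (Fin d) (Fin d) ℂ →ₗ[ℂ] Matrix (Fin d) (Fin d) ℂ) :
    Matrix (Fin d × Fin d) (Fin d × Fin d) ℂ :=
  Matrix.of fun p q => T (Matrix.single p.1 q.1 1) p.2 q.2

def CP (T : Matrix (Fin d) (Fin d) ℂ →ₗ[ℂ] Matrix (Fin d) (Fin d) ℂ) : Prop :=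
  (choi T).PosSemidef

noncomputable def replaceChan (τ : Matrix (Fin d) (Fin d) ℂ) :
    Matrix (Fin d) (Fin d) ℂ →ₗ[ℂ] Matrix (Fin d) (Fin d) ℂ where
  toFun X := X.trace • τ
  map_add' X Y := by simp [Matrix.trace_add, add_smul]
  map_smul' c X := by simp [Matrix.trace_smul, smul_smul]

noncomputable def prodComp {n : ℕ} (T : Fin n → (Matrix (Fin d) (Fin d) ℂ →ₗ[ℂ] Matrix (Fin d) (Fin d) ℂ)) :
    Matrix (Fin d) (Fin d) ℂ →ₗ[ℂ] Matrix (Fin d) (Fin d) ℂ :=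
  (List.ofFn T).foldl (fun acc f => f ∘ₗ acc) LinearMap.id

noncomputable def lpow (T : Matrix (Fin d) (Fin d) ℂ →ₗ[ℂ] Matrix (Fin d) (Fin d) ℂ) :
    ℕ → (Matrix (Fin d) (Fin d) ℂ →ₗ[ℂ] Matrix (Fin d) (Fin d) ℂ)
  | 0 => LinearMap.id
  | n + 1 => T ∘ₗ lpow T n

noncomputable def conjPair (K0 K1 : Matrix (Fin 2) (Fin 2) ℂ) :
    Matrix (Fin 2) (Fin 2) ℂ →ₗ[ℂ] Matrix (Fin 2) (Fin 2) ℂ where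
  toFun X := K0 * X * K0ᴴ + K1 * X * K1ᴴ
  map_add' X Y := by
    simp only [Matrix.mul_add, Matrix.add_mul]
    abel
  map_smul' c X := by
    simp [Matrix.mul_smul, Matrix.smul_mul, smul_add]

end TD
namespace Aux

variable {d : ℕ}

lemma smul_psd (c : ℝ) (hc : 0 ≤ c) {M : Matrix (Fin d) (Fin d) ℂ} (hM : M.PosSemidef) :
    ((c : ℂ) • M).PosSemidef := by
  rw [Matrix.posSemidef_iff_dotProduct_mulVec]
  constructor
  · unfold Matrix.IsHermitian
    rw [conjTranspose_smul, hM.1.eq, Complex.star_def, Complex.conj_ofReal]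
  · intro x
    rw [Matrix.smul_mulVec, dotProduct_smul, smul_eq_mul]
    exact mul_nonneg (by exact_mod_cast hc) (hM.dotProduct_mulVec_nonneg x)

lemma conj_mul (U : Matrix (Fin d) (Fin d) ℂ) (hUU : Uᴴ * U = 1)
    (X Y : Matrix (Fin d) (Fin d) ℂ) :
    (U * X * Uᴴ) * (U * Y * Uᴴ) = U * (X * Y) * Uᴴ := by
  simp only [Matrix.mul_assoc]
  rw [← Matrix.mul_assoc Uᴴ U, hUU, Matrix.one_mul]

lemma trace_conj (U : Matrix (Fin d) (Fin d) ℂ) (hUU : Uᴴ * U = 1)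
    (M : Matrix (Fin d) (Fin d) ℂ) : (U * M * Uᴴ).trace = M.trace := by
  rw [Matrix.trace_mul_comm, ← Matrix.mul_assoc, hUU, Matrix.one_mul]

lemma trNorm_unitary_diag (U : Matrix (Fin d) (Fin d) ℂ)
    (hU : U ∈ Matrix.unitaryGroup (Fin d) ℂ) (μ : Fin d → ℝ) :
    TD.trNorm (U * Matrix.diagonal (fun i => (μ i : ℂ)) * Uᴴ) = ∑ i, |μ i| := by
  have hUU : Uᴴ * U = 1 := by
    rw [← Matrix.star_eq_conjTranspose]; exact (Matrix.mem_unitaryGroup_iff'.mp hU)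
  set A := U * Matrix.diagonal (fun i => (μ i : ℂ)) * Uᴴ with hA
  have hD : (Matrix.diagonal (fun i => (μ i : ℂ)))ᴴ = Matrix.diagonal (fun i => (μ i : ℂ)) := by
    rw [Matrix.diagonal_conjTranspose]
    have : (star fun i => ((μ i : ℝ) : ℂ)) = fun i => ((μ i : ℝ) : ℂ) :=
      funext fun i => Complex.conj_ofReal (μ i)
    rw [this]
  have hAH : Aᴴ = A := by
    rw [hA, Matrix.conjTranspose_mul, Matrix.conjTranspose_mul, hD,
      Matrix.conjTranspose_conjTranspose, Matrix.mul_assoc]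
  set S := U * Matrix.diagonal (fun i => ((|μ i| : ℝ) : ℂ)) * Uᴴ with hS
  have hSpsd : S.PosSemidef := by
    refine Matrix.PosSemidef.mul_mul_conjTranspose_same ?_ U
    refine Matrix.posSemidef_diagonal_iff.mpr fun i => ?_
    exact_mod_cast abs_nonneg (μ i)
  have hfun : (fun i => ((|μ i| : ℝ) : ℂ) * ((|μ i| : ℝ) : ℂ)) =
      (fun i => ((μ i : ℝ) : ℂ) * ((μ i : ℝ) : ℂ)) := by
    funext i
    rw [← Complex.ofReal_mul, ← Complex.ofReal_mul, abs_mul_abs_self]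
  have hsq : S ^ 2 = Aᴴ * A := by
    rw [pow_two, hAH, hS, hA, conj_mul U hUU, conj_mul U hUU,
      Matrix.diagonal_mul_diagonal, Matrix.diagonal_mul_diagonal, hfun]
  have hcp : (Aᴴ * A).charpoly
      = ∏ i, (Polynomial.X - Polynomial.C (((μ i : ℝ) : ℂ) * ((μ i : ℝ) : ℂ))) := by
    rw [hAH, hA, conj_mul U hUU, Matrix.diagonal_mul_diagonal, Matrix.charpoly_mul_comm,
      ← Matrix.mul_assoc, hUU, Matrix.one_mul, Matrix.charpoly_diagonal]
  have hroots := (Matrix.posSemidef_conjTranspose_mul_self A).1.roots_charpoly_eq_eigenvalues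
  rw [hcp, Polynomial.roots_prod _ _
    (Finset.prod_ne_zero_iff.mpr fun i _ => Polynomial.X_sub_C_ne_zero _)] at hroots
  have hsum := congrArg (fun m : Multiset ℂ => (m.map (fun z => Real.sqrt z.re)).sum) hroots
  simp only [Polynomial.roots_X_sub_C, Multiset.map_map, Multiset.bind_singleton] at hsum
  rw [TD.trNorm, Matrix.trace_mul_comm, ← Matrix.mul_assoc, Unitary.coe_star_mul_self,
    Matrix.one_mul, Matrix.trace_diagonal, Complex.re_sum]
  simp only [Complex.ofReal_re]
  have habs : ∀ i, |μ i| = Real.sqrt (μ i * μ i) := fun i => (Real.sqrt_mul_self_eq_abs (μ i)).symm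
  simp only [habs]
  simpa [Function.comp_def, Finset.sum_eq_multiset_sum] using hsum.symm

lemma diag_re_nonneg {M : Matrix (Fin d) (Fin d) ℂ} (hM : M.PosSemidef) (i : Fin d) :
    0 ≤ (M i i).re := by
  have h := hM.dotProduct_mulVec_nonneg (Pi.single i 1)
  have he : dotProduct (star (Pi.single i 1)) (M *ᵥ Pi.single i 1) = M i i := by
    simp [Matrix.mulVec_single, dotProduct, Pi.single_apply, apply_ite]
  rw [he] at h
  exact (Complex.le_def.mp h).1

lemma trNorm_sub_le {C D : Matrix (Fin d) (Fin d) ℂ} (hC : C.PosSemidef) (hD : D.PosSemidef) :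
    TD.trNorm (C - D) ≤ C.trace.re + D.trace.re := by
  have hY : (C - D).IsHermitian := hC.1.sub hD.1
  set V : Matrix (Fin d) (Fin d) ℂ := ↑(hY.eigenvectorUnitary) with hV
  have hVmem : V ∈ Matrix.unitaryGroup (Fin d) ℂ := hY.eigenvectorUnitary.2
  have hVV : Vᴴ * V = 1 := by
    rw [← Matrix.star_eq_conjTranspose]; exact (Matrix.mem_unitaryGroup_iff'.mp hVmem)
  have hVVT : V * Vᴴ = 1 := by
    rw [← Matrix.star_eq_conjTranspose]; exact (Matrix.mem_unitaryGroup_iff.mp hVmem)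
  set ν := hY.eigenvalues with hν
  have hspec : C - D = V * Matrix.diagonal (fun i => ((ν i : ℝ) : ℂ)) * Vᴴ := by
    rw [← Matrix.star_eq_conjTranspose]
    exact hY.spectral_theorem
  rw [hspec, trNorm_unitary_diag V hVmem ν]
  have hdiag : Vᴴ * (C - D) * V = Matrix.diagonal (fun i => ((ν i : ℝ) : ℂ)) := by
    rw [← Matrix.star_eq_conjTranspose]
    have := hY.conjStarAlgAut_star_eigenvectorUnitary
    rw [Unitary.conjStarAlgAut_apply] at this
    simp at this
    exact this
  have hsplit : Vᴴ * (C - D) * V = Vᴴ * C * V - Vᴴ * D * V := by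
    rw [Matrix.mul_sub, Matrix.sub_mul]
  have hCc : (Vᴴ * C * V).PosSemidef := hC.conjTranspose_mul_mul_same V
  have hDc : (Vᴴ * D * V).PosSemidef := hD.conjTranspose_mul_mul_same V
  have hterm : ∀ i, |ν i| ≤ ((Vᴴ * C * V) i i).re + ((Vᴴ * D * V) i i).re := by
    intro i
    have h0 : ((ν i : ℝ) : ℂ) = (Vᴴ * C * V) i i - (Vᴴ * D * V) i i := by
      have h1 : Matrix.diagonal (fun i => ((ν i : ℝ) : ℂ)) i i
          = (Vᴴ * C * V - Vᴴ * D * V) i i := by rw [← hsplit, hdiag]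
      simpa [Matrix.diagonal_apply_eq, Matrix.sub_apply] using h1
    have h2 : ν i = ((Vᴴ * C * V) i i).re - ((Vᴴ * D * V) i i).re := by
      have := congrArg Complex.re h0
      simpa using this
    have hc := diag_re_nonneg hCc i
    have hd := diag_re_nonneg hDc i
    rw [h2]
    exact abs_le.mpr ⟨by linarith, by linarith⟩
  have e1 : (Vᴴ * C * V).trace = C.trace := by
    rw [Matrix.trace_mul_comm, ← Matrix.mul_assoc, hVVT, Matrix.one_mul]
  have e2 : (Vᴴ * D * V).trace = D.trace := by
    rw [Matrix.trace_mul_comm, ← Matrix.mul_assoc, hVVT, Matrix.one_mul]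
  calc ∑ i, |ν i| ≤ ∑ i, (((Vᴴ * C * V) i i).re + ((Vᴴ * D * V) i i).re) :=
        Finset.sum_le_sum fun i _ => hterm i
    _ = (Vᴴ * C * V).trace.re + (Vᴴ * D * V).trace.re := by
        rw [Finset.sum_add_distrib]
        simp [Matrix.trace, Matrix.diag, Complex.re_sum]
    _ = C.trace.re + D.trace.re := by rw [e1, e2]

lemma sum_psd {ι : Type*} (s : Finset ι) (f : ι → Matrix (Fin d) (Fin d) ℂ)
    (h : ∀ i ∈ s, (f i).PosSemidef) : (∑ i ∈ s, f i).PosSemidef :=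
  Finset.sum_induction f _ (fun _ _ ha hb => ha.add hb) Matrix.PosSemidef.zero h

lemma key (Φ : Matrix (Fin d) (Fin d) ℂ →ₗ[ℂ] Matrix (Fin d) (Fin d) ℂ)
    (htr : TD.TrPres Φ) (B : Matrix (Fin d) (Fin d) ℂ)
    (hlow : ∀ P : Matrix (Fin d) (Fin d) ℂ, P.IsHermitian → P * P = P → P.trace = 1 →
      (Φ P - B).PosSemidef)
    {X : Matrix (Fin d) (Fin d) ℂ} (hXh : X.IsHermitian) (hXtr : X.trace = 0) :
    TD.trNorm (Φ X) ≤ (1 - B.trace.re) * TD.trNorm X := by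
  classical
  set U : Matrix (Fin d) (Fin d) ℂ := ↑(hXh.eigenvectorUnitary) with hU
  have hUmem : U ∈ Matrix.unitaryGroup (Fin d) ℂ := hXh.eigenvectorUnitary.2
  have hUU : Uᴴ * U = 1 := by
    rw [← Matrix.star_eq_conjTranspose]; exact (Matrix.mem_unitaryGroup_iff'.mp hUmem)
  set μ := hXh.eigenvalues with hμdef
  have hspec : X = U * Matrix.diagonal (fun i => ((μ i : ℝ) : ℂ)) * Uᴴ := by
    rw [← Matrix.star_eq_conjTranspose]
    exact hXh.spectral_theorem
  set P : Fin d → Matrix (Fin d) (Fin d) ℂ :=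
    fun i => U * Matrix.diagonal (Pi.single i 1) * Uᴴ with hP
  have hsingle : ∀ i : Fin d, star (Pi.single i 1 : Fin d → ℂ) = Pi.single i 1 := by
    intro i; funext j; by_cases h : j = i <;> simp [Pi.single_apply, h]
  have hsingle2 : ∀ i : Fin d,
      (fun j => (Pi.single i 1 : Fin d → ℂ) j * (Pi.single i 1 : Fin d → ℂ) j)
        = (Pi.single i 1 : Fin d → ℂ) := by
    intro i; funext j; by_cases h : j = i <;> simp [Pi.single_apply, h]
  have hPh : ∀ i, (P i).IsHermitian := by
    intro i
    show (U * Matrix.diagonal (Pi.single i 1) * Uᴴ)ᴴ = U * Matrix.diagonal (Pi.single i 1) * Uᴴ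
    rw [Matrix.conjTranspose_mul, Matrix.conjTranspose_mul,
      Matrix.conjTranspose_conjTranspose, Matrix.diagonal_conjTranspose, hsingle i,
      Matrix.mul_assoc]
  have hPP : ∀ i, P i * P i = P i := by
    intro i
    show (U * Matrix.diagonal (Pi.single i 1) * Uᴴ) * (U * Matrix.diagonal (Pi.single i 1) * Uᴴ)
      = U * Matrix.diagonal (Pi.single i 1) * Uᴴ
    rw [conj_mul U hUU, Matrix.diagonal_mul_diagonal, hsingle2 i]
  have hPtr : ∀ i, (P i).trace = 1 := by
    intro i
    rw [hP, trace_conj U hUU, Matrix.trace_diagonal]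
    simp
  have hdiagsum : Matrix.diagonal (fun i => ((μ i : ℝ) : ℂ))
      = ∑ i, ((μ i : ℝ) : ℂ) • Matrix.diagonal (Pi.single i 1) := by
    ext j k
    by_cases h : j = k
    · subst h
      simp [Matrix.sum_apply, Matrix.diagonal_apply, Pi.single_apply]
    · simp [Matrix.sum_apply, Matrix.diagonal_apply_ne _ h, h]
  have hXsum : X = ∑ i, ((μ i : ℝ) : ℂ) • P i := by
    rw [hspec, hdiagsum, Matrix.mul_sum, Matrix.sum_mul]
    refine Finset.sum_congr rfl fun i _ => ?_
    show (U * (((μ i : ℝ) : ℂ) • Matrix.diagonal (Pi.single i 1))) * Uᴴ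
      = ((μ i : ℝ) : ℂ) • (U * Matrix.diagonal (Pi.single i 1) * Uᴴ)
    rw [Matrix.mul_smul, Matrix.smul_mul]
  set μp : Fin d → ℝ := fun i => max (μ i) 0 with hμp
  set μm : Fin d → ℝ := fun i => max (-μ i) 0 with hμm
  have hpm : ∀ i, μp i - μm i = μ i := fun i => max_zero_sub_max_neg_zero_eq_self (μ i)
  have habs : ∀ i, μp i + μm i = |μ i| := by
    intro i
    rcases le_total 0 (μ i) with h | h
    · rw [hμp, hμm]
      simp only []
      rw [max_eq_left h, max_eq_right (neg_nonpos.mpr h), abs_of_nonneg h, add_zero]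
    · rw [hμp, hμm]
      simp only []
      rw [max_eq_right h, max_eq_left (neg_nonneg.mpr h), abs_of_nonpos h, zero_add]
  have hμp0 : ∀ i, 0 ≤ μp i := fun i => le_max_right _ _
  have hμm0 : ∀ i, 0 ≤ μm i := fun i => le_max_right _ _
  set Xp : Matrix (Fin d) (Fin d) ℂ := ∑ i, ((μp i : ℝ) : ℂ) • P i with hXp
  set Xm : Matrix (Fin d) (Fin d) ℂ := ∑ i, ((μm i : ℝ) : ℂ) • P i with hXm
  have hXpm : X = Xp - Xm := by
    rw [hXsum, hXp, hXm, ← Finset.sum_sub_distrib]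
    refine Finset.sum_congr rfl fun i _ => ?_
    rw [← sub_smul, ← Complex.ofReal_sub, hpm]
  set t := ∑ i, μp i with ht
  have htrμ : ∑ i, μ i = 0 := by
    have h1 : X.trace = ∑ i, ((μ i : ℝ) : ℂ) := by
      rw [hspec, trace_conj U hUU, Matrix.trace_diagonal]
    have h2 := h1.symm.trans hXtr
    have := congrArg Complex.re h2
    simpa [Complex.re_sum] using this
  have hst : ∑ i, μm i = t := by
    have h1 : ∑ i, μp i - ∑ i, μm i = ∑ i, μ i := by
      rw [← Finset.sum_sub_distrib]
      exact Finset.sum_congr rfl fun i _ => hpm i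
    rw [htrμ] at h1
    rw [ht]
    linarith
  have htrX : TD.trNorm X = t + t := by
    rw [hspec, trNorm_unitary_diag U hUmem μ]
    have habs' : ∑ i, |μ i| = ∑ i, (μp i + μm i) :=
      Finset.sum_congr rfl fun i _ => (habs i).symm
    rw [habs', Finset.sum_add_distrib, hst, ← ht]
  have hCpsd : (Φ Xp - (t : ℂ) • B).PosSemidef := by
    have h1 : Φ Xp = ∑ i, ((μp i : ℝ) : ℂ) • Φ (P i) := by
      rw [hXp, map_sum]
      exact Finset.sum_congr rfl fun i _ => map_smul Φ _ _
    have h2 : (t : ℂ) • B = ∑ i, ((μp i : ℝ) : ℂ) • B := by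
      rw [← Finset.sum_smul]
      congr 1
      rw [ht]; push_cast; rfl
    rw [h1, h2, ← Finset.sum_sub_distrib]
    refine sum_psd _ _ fun i _ => ?_
    rw [← smul_sub]
    exact smul_psd _ (hμp0 i) (hlow (P i) (hPh i) (hPP i) (hPtr i))
  have hDpsd : (Φ Xm - (t : ℂ) • B).PosSemidef := by
    have h1 : Φ Xm = ∑ i, ((μm i : ℝ) : ℂ) • Φ (P i) := by
      rw [hXm, map_sum]
      exact Finset.sum_congr rfl fun i _ => map_smul Φ _ _
    have h2 : (t : ℂ) • B = ∑ i, ((μm i : ℝ) : ℂ) • B := by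
      rw [← Finset.sum_smul]
      congr 1
      rw [← hst]; push_cast; rfl
    rw [h1, h2, ← Finset.sum_sub_distrib]
    refine sum_psd _ _ fun i _ => ?_
    rw [← smul_sub]
    exact smul_psd _ (hμm0 i) (hlow (P i) (hPh i) (hPP i) (hPtr i))
  have hPhiX : Φ X = (Φ Xp - (t : ℂ) • B) - (Φ Xm - (t : ℂ) • B) := by
    rw [hXpm, map_sub]
    abel
  have hXpt : Xp.trace = (t : ℂ) := by
    rw [hXp, Matrix.trace_sum]
    simp only [Matrix.trace_smul, hPtr, smul_eq_mul, mul_one]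
    rw [ht]; push_cast; rfl
  have hXmt : Xm.trace = (t : ℂ) := by
    rw [hXm, Matrix.trace_sum]
    simp only [Matrix.trace_smul, hPtr, smul_eq_mul, mul_one]
    rw [← hst]; push_cast; rfl
  have htrC : (Φ Xp - (t : ℂ) • B).trace.re = t - t * B.trace.re := by
    rw [Matrix.trace_sub, Matrix.trace_smul, htr Xp, hXpt]
    simp [Complex.mul_re]
  have htrD : (Φ Xm - (t : ℂ) • B).trace.re = t - t * B.trace.re := by
    rw [Matrix.trace_sub, Matrix.trace_smul, htr Xm, hXmt]
    simp [Complex.mul_re]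
  have hb : TD.trNorm (Φ X) ≤ (t - t * B.trace.re) + (t - t * B.trace.re) := by
    rw [hPhiX]
    calc TD.trNorm ((Φ Xp - (t : ℂ) • B) - (Φ Xm - (t : ℂ) • B))
        ≤ (Φ Xp - (t : ℂ) • B).trace.re + (Φ Xm - (t : ℂ) • B).trace.re :=
          trNorm_sub_le hCpsd hDpsd
      _ = (t - t * B.trace.re) + (t - t * B.trace.re) := by rw [htrC, htrD]
  rw [htrX]
  nlinarith [hb]

lemma trNorm_pos {X : Matrix (Fin d) (Fin d) ℂ} (hXh : X.IsHermitian) (hX : X ≠ 0) :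
    0 < TD.trNorm X := by
  set U : Matrix (Fin d) (Fin d) ℂ := ↑(hXh.eigenvectorUnitary) with hU
  have hUmem : U ∈ Matrix.unitaryGroup (Fin d) ℂ := hXh.eigenvectorUnitary.2
  set μ := hXh.eigenvalues with hμdef
  have hspec : X = U * Matrix.diagonal (fun i => ((μ i : ℝ) : ℂ)) * Uᴴ := by
    rw [← Matrix.star_eq_conjTranspose]
    exact hXh.spectral_theorem
  rw [hspec, trNorm_unitary_diag U hUmem μ]
  have hnn : (0 : ℝ) ≤ ∑ i, |μ i| := Finset.sum_nonneg fun i _ => abs_nonneg _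
  rcases hnn.lt_or_eq with h | h
  · exact h
  · exfalso
    have hall := (Finset.sum_eq_zero_iff_of_nonneg (fun i _ => abs_nonneg (μ i))).mp h.symm
    have hzero : (fun i => ((μ i : ℝ) : ℂ)) = fun _ => 0 := by
      funext i
      rw [abs_eq_zero.mp (hall i (Finset.mem_univ i))]
      norm_num
    apply hX
    rw [hspec, hzero]
    simp

end Aux

theorem stmt9 {d : ℕ} (hd : 2 ≤ d)
    (Φ : Matrix (Fin d) (Fin d) ℂ →ₗ[ℂ] Matrix (Fin d) (Fin d) ℂ)
    (hcp : TD.CP Φ) (htr : TD.TrPres Φ)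
    (B : Matrix (Fin d) (Fin d) ℂ) (hB : B.PosSemidef)
    (hlow : ∀ P : Matrix (Fin d) (Fin d) ℂ, P.IsHermitian → P * P = P → P.trace = 1 →
      (Φ P - B).PosSemidef) :
    TD.kappaTr Φ ≤ 1 - B.trace.re := by
  classical
  have hne : Nonempty {X : Matrix (Fin d) (Fin d) ℂ // X.IsHermitian ∧ X.trace = 0 ∧ X ≠ 0} := by
    set i0 : Fin d := ⟨0, by omega⟩ with hi0
    set i1 : Fin d := ⟨1, by omega⟩ with hi1
    have hne01 : i0 ≠ i1 := by
      simp [hi0, hi1, Fin.ext_iff]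
    set v : Fin d → ℂ := Pi.single i0 1 - Pi.single i1 1 with hv
    refine ⟨⟨Matrix.diagonal v, ?_, ?_, ?_⟩⟩
    · refine Matrix.isHermitian_diagonal_of_self_adjoint v ?_
      funext j
      rw [hv]
      by_cases h : j = i0 <;> by_cases h' : j = i1 <;>
        simp [Pi.single_apply, h, h']
    · rw [Matrix.trace_diagonal, hv]
      simp [Finset.sum_sub_distrib]
    · intro h0
      have := congrFun (congrFun h0 i0) i0
      rw [Matrix.diagonal_apply_eq, hv] at this
      simp [Pi.single_eq_same, Pi.single_eq_of_ne hne01] at this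
  haveI := hne
  rw [TD.kappaTr]
  refine ciSup_le ?_
  rintro ⟨X, hXh, hXtr, hXne⟩
  have hpos : 0 < TD.trNorm X := Aux.trNorm_pos hXh hXne
  rw [div_le_iff₀ hpos]
  exact Aux.key Φ htr B hlow hXh hXtr
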